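/- Let G be a groupoid, R an associative ring, and α = (D_g, α_g)_{g∈G} a partial action of G on R such that D_g is s-unital for every g ∈ G and R = ⊕_{e∈G₀} D_e. Let I be a two-sided ideal of S = R ⋊_α G, and set J = P₀(I), I₀ = I ∩ ⊕_{e∈G₀} D_e δ_e, and J₀ = P₀(I₀). Then: (i) I ⊆ J ⋊_{α^J} G; (ii) if b_t δ_t ∈ J₀ ⋊_{α^{J₀}} G for some t ∈ G and b_t ∈ D_t ∩ J₀, then b_t δ_{r(t)} ∈ I₀; (iii) J₀ ⋊_{α^{J₀}} G ⊆ I; (iv) J₀ ⋊_{α^{J₀}} G = S I₀ S. -/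

import Mathlib

open scoped Classical

/-- A (discrete) groupoid, presented as its set of morphisms `G`, with source map `s`,
range map `r`, inversion `inv` and a partially defined multiplication `mul`.
The units (identity morphisms, i.e. the objects) are the elements `e` with `r e = e`. -/
structure DGroupoid (G : Type*) where
  s : G → G
  r : G → G
  inv : G → G
  mul : (g h : G) → s g = r h → G
  s_inv : ∀ g, s (inv g) = r g
  r_inv : ∀ g, r (inv g) = s g
  inv_inv : ∀ g, inv (inv g) = g
  r_mul : ∀ g h (p : s g = r h), r (mul g h p) = r g
  s_mul : ∀ g h (p : s g = r h), s (mul g h p) = s h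
  r_idem : ∀ g, r (r g) = r g
  s_of_r : ∀ g, s (r g) = r g
  r_of_s : ∀ g, r (s g) = s g
  s_idem : ∀ g, s (s g) = s g
  assoc : ∀ g h k (p : s g = r h) (q : s h = r k) (pq : s (mul g h p) = r k)
      (qp : s g = r (mul h k q)), mul (mul g h p) k pq = mul g (mul h k q) qp
  id_mul : ∀ g (p : s (r g) = r g), mul (r g) g p = g
  mul_id : ∀ g (p : s g = r (s g)), mul g (s g) p = g
  mul_inv : ∀ g (p : s g = r (inv g)), mul g (inv g) p = r g
  inv_mul : ∀ g (p : s (inv g) = r g), mul (inv g) g p = s g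

namespace DGroupoid

/-- `e` is a unit (an object, identified with its identity morphism) of the groupoid. -/
def unit {G : Type*} (𝔾 : DGroupoid G) (e : G) : Prop := 𝔾.r e = e

end DGroupoid

section RingDefs

variable {R : Type*} [NonUnitalRing R]

/-- A subset of a (possibly non-unital) ring is a two-sided ideal. -/
def IsRingIdeal (J : Set R) : Prop :=
  (0 : R) ∈ J ∧ (∀ x ∈ J, ∀ y ∈ J, x + y ∈ J) ∧ (∀ x ∈ J, -x ∈ J) ∧
    ∀ x ∈ J, ∀ y : R, x * y ∈ J ∧ y * x ∈ J

/-- A subset of a ring, viewed as a ring, is s-unital: every `x` in it lies in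
`xT ∩ Tx`. -/
def IsSUnitalSet (J : Set R) : Prop :=
  ∀ x ∈ J, (∃ u ∈ J, x * u = x) ∧ (∃ v ∈ J, v * x = x)

end RingDefs

/-- A partial action `α = (D_g, α_g)_{g ∈ G}` of a groupoid `𝔾` on a
(possibly non-unital, associative) ring `R`:  each `D_{r g}` is a two-sided ideal of `R`,
each `D_g` is a two-sided ideal of `D_{r g}`, and `α_g = act g` restricts to a ring
isomorphism `D_{g⁻¹} → D_g` (the function `act g` is arbitrary outside `D_{g⁻¹}`),
satisfying the axioms of a partial action. -/
structure PartialAction {G : Type*} (𝔾 : DGroupoid G) (R : Type*) [NonUnitalRing R] where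
  D : G → Set R
  zero_mem : ∀ g, (0 : R) ∈ D g
  add_mem : ∀ g, ∀ x ∈ D g, ∀ y ∈ D g, x + y ∈ D g
  neg_mem : ∀ g, ∀ x ∈ D g, -x ∈ D g
  subset_r : ∀ g, D g ⊆ D (𝔾.r g)
  idealR : ∀ g, IsRingIdeal (D (𝔾.r g))
  idealInR : ∀ g, ∀ x ∈ D g, ∀ y ∈ D (𝔾.r g), x * y ∈ D g ∧ y * x ∈ D g
  act : G → R → R
  act_mem : ∀ g, ∀ x ∈ D (𝔾.inv g), act g x ∈ D g
  act_add : ∀ g, ∀ x ∈ D (𝔾.inv g), ∀ y ∈ D (𝔾.inv g), act g (x + y) = act g x + act g y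
  act_mul : ∀ g, ∀ x ∈ D (𝔾.inv g), ∀ y ∈ D (𝔾.inv g), act g (x * y) = act g x * act g y
  act_inv : ∀ g, ∀ x ∈ D (𝔾.inv g), act (𝔾.inv g) (act g x) = x
  act_unit : ∀ e, 𝔾.unit e → ∀ x ∈ D e, act e x = x
  act_comp_mem : ∀ g h (p : 𝔾.s g = 𝔾.r h), ∀ x, x ∈ D (𝔾.inv g) → x ∈ D h →
      act (𝔾.inv h) x ∈ D (𝔾.inv (𝔾.mul g h p))
  act_comp : ∀ g h (p : 𝔾.s g = 𝔾.r h), ∀ x ∈ D (𝔾.inv h), act h x ∈ D (𝔾.inv g) →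
      act g (act h x) = act (𝔾.mul g h p) x

namespace PartialAction

variable {G : Type*} {R : Type*} [NonUnitalRing R] {𝔾 : DGroupoid G} (P : PartialAction 𝔾 R)

/-- `R = ⊕_{e ∈ G₀} D_e`: every element of `R` decomposes as a finite sum of elements
of the `D_e` (`e` a unit), and the decomposition is unique (a finite sum of elements of
the distinct `D_e`'s which vanishes has all terms zero). -/
def directSum : Prop :=
  (∀ x : R, ∃ f : G →₀ R, (∀ g ∈ f.support, 𝔾.unit g) ∧ (∀ g, f g ∈ P.D g) ∧
      (f.sum fun _ v => v) = x) ∧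
    ∀ f : G →₀ R, (∀ g ∈ f.support, 𝔾.unit g) → (∀ g, f g ∈ P.D g) →
      (f.sum fun _ v => v) = 0 → f = 0

/-- The carrier of the partial skew groupoid ring `R ⋊_α G`: finitely supported
functions `a : G →₀ R` (thought of as `Σ_g a_g δ_g`) with `a g ∈ D g`. -/
def carrier : Set (G →₀ R) := {a | ∀ g, a g ∈ P.D g}

/-- The multiplication of the partial skew groupoid ring:
`(a_g δ_g)(b_h δ_h) = α_g(α_{g⁻¹}(a_g) b_h) δ_{gh}` when `(g,h)` is composable,
and `0` otherwise. -/
noncomputable def skewMul (a b : G →₀ R) : G →₀ R :=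
  a.support.sum fun g => b.support.sum fun h =>
    if p : 𝔾.s g = 𝔾.r h then
      Finsupp.single (𝔾.mul g h p) (P.act g (P.act (𝔾.inv g) (a g) * b h))
    else 0

/-- The subset `⊕_{e ∈ G₀} D_e δ_e` of `R ⋊_α G`: elements supported on units. -/
def diag : Set (G →₀ R) := {a | (∀ g, a g ∈ P.D g) ∧ ∀ g ∈ a.support, 𝔾.unit g}

/-- `I` is a two-sided ideal of the partial skew groupoid ring `R ⋊_α G`. -/
def IsSkewIdeal (I : Set (G →₀ R)) : Prop :=
  I ⊆ P.carrier ∧ (0 : G →₀ R) ∈ I ∧ (∀ x ∈ I, ∀ y ∈ I, x + y ∈ I) ∧ (∀ x ∈ I, -x ∈ I) ∧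
    ∀ x ∈ I, ∀ y ∈ P.carrier, P.skewMul x y ∈ I ∧ P.skewMul y x ∈ I

/-- The projection `P₀ : R ⋊_α G → R`, `Σ_g a_g δ_g ↦ Σ_{e ∈ G₀} a_e`. -/
noncomputable def P0 (_P : PartialAction 𝔾 R) (a : G →₀ R) : R :=
  a.sum fun g v => if 𝔾.unit g then v else 0

/-- An ideal `I` of `R ⋊_α G` is `G`-graded if it is generated by its homogeneous
components, i.e. `I = ⊕_g (I ∩ D_g δ_g)`. -/
def IsGradedIdeal (I : Set (G →₀ R)) : Prop :=
  P.IsSkewIdeal I ∧ ∀ a ∈ I, ∀ g : G, Finsupp.single g (a g) ∈ I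

/-- `J` is a `G`-invariant (two-sided) ideal of `R`: `α_g(D_{g⁻¹} ∩ J) ⊆ J`. -/
def IsInvIdeal (J : Set R) : Prop :=
  IsRingIdeal J ∧ ∀ g, ∀ x ∈ P.D (𝔾.inv g) ∩ J, P.act g x ∈ J

/-- The subset `J ⋊_{α^J} G = ⊕_g (J ∩ D_g) δ_g` of `R ⋊_α G` attached to a
`G`-invariant ideal `J` of `R`. -/
def skewOf (J : Set R) : Set (G →₀ R) := {a | ∀ g, a g ∈ P.D g ∩ J}

/-- `⊕_{e ∈ G₀} D_e δ_e` is a maximal commutative subring of `R ⋊_α G`: it is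
commutative and coincides with its centralizer. -/
def IsMaxCommDiag : Prop :=
  (∀ a ∈ P.diag, ∀ b ∈ P.diag, P.skewMul a b = P.skewMul b a) ∧
    ∀ b ∈ P.carrier, (∀ a ∈ P.diag, P.skewMul a b = P.skewMul b a) → b ∈ P.diag

/-- The partial action has the intersection property: every nonzero ideal of
`R ⋊_α G` intersects `⊕_{e ∈ G₀} D_e δ_e` nontrivially. -/
def HasIntersectionProperty : Prop :=
  ∀ I : Set (G →₀ R), P.IsSkewIdeal I → I ≠ {0} → I ∩ P.diag ≠ {0}

/-- `R` is `G`-simple: the only `G`-invariant ideals of `R` are `{0}` and `R`. -/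
def GSimple : Prop := ∀ J : Set R, P.IsInvIdeal J → J = {0} ∨ J = Set.univ

/-- `R` is `G`-prime: if `I, J` are `G`-invariant ideals with `IJ = {0}`, then
`I = {0}` or `J = {0}`. -/
def GPrime : Prop :=
  ∀ I J : Set R, P.IsInvIdeal I → P.IsInvIdeal J →
    (∀ x ∈ I, ∀ y ∈ J, x * y = 0) → I = {0} ∨ J = {0}

/-- `R ⋊_α G` is graded simple. -/
def GradedSimple : Prop :=
  ∀ I : Set (G →₀ R), P.IsGradedIdeal I → I = {0} ∨ I = P.carrier

/-- `R ⋊_α G` is graded prime. -/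
def GradedPrime : Prop :=
  ∀ I J : Set (G →₀ R), P.IsGradedIdeal I → P.IsGradedIdeal J →
    (∀ x ∈ I, ∀ y ∈ J, P.skewMul x y = 0) → I = {0} ∨ J = {0}

/-- `R ⋊_α G` is a prime ring. -/
def SkewPrime : Prop :=
  ∀ I J : Set (G →₀ R), P.IsSkewIdeal I → P.IsSkewIdeal J →
    (∀ x ∈ I, ∀ y ∈ J, P.skewMul x y = 0) → I = {0} ∨ J = {0}

/-- `R ⋊_α G` is a simple ring. -/
def SkewSimple : Prop :=
  ∀ I : Set (G →₀ R), P.IsSkewIdeal I → I = {0} ∨ I = P.carrier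

end PartialAction

namespace DGroupoid

variable {G : Type*} (𝔾 : DGroupoid G)

lemma mul_congr {g g' h h' : G} (hg : g = g') (hh : h = h')
    (p : 𝔾.s g = 𝔾.r h) (p' : 𝔾.s g' = 𝔾.r h') :
    𝔾.mul g h p = 𝔾.mul g' h' p' := by subst hg; subst hh; rfl

lemma unit_r (g : G) : 𝔾.unit (𝔾.r g) := 𝔾.r_idem g

variable {𝔾}

lemma unit_s {e : G} (he : 𝔾.unit e) : 𝔾.s e = e := by
  conv_lhs => rw [← he]
  rw [𝔾.s_of_r, he]

lemma unit_inv {e : G} (he : 𝔾.unit e) : 𝔾.inv e = e := by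
  have hre : 𝔾.r (𝔾.inv e) = e := by rw [𝔾.r_inv]; exact unit_s he
  have p' : 𝔾.s (𝔾.r (𝔾.inv e)) = 𝔾.r (𝔾.inv e) := 𝔾.s_of_r _
  have p : 𝔾.s e = 𝔾.r (𝔾.inv e) := by rw [hre, unit_s he]
  calc 𝔾.inv e = 𝔾.mul (𝔾.r (𝔾.inv e)) (𝔾.inv e) p' := (𝔾.id_mul _ p').symm
    _ = 𝔾.mul e (𝔾.inv e) p := 𝔾.mul_congr hre rfl p' p
    _ = 𝔾.r e := 𝔾.mul_inv e p
    _ = e := he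

lemma unit_mul_self {e : G} (he : 𝔾.unit e) (p : 𝔾.s e = 𝔾.r e) : 𝔾.mul e e p = e :=
  calc 𝔾.mul e e p = 𝔾.mul (𝔾.r e) e (𝔾.s_of_r e) := 𝔾.mul_congr he.symm rfl p _
    _ = e := 𝔾.id_mul e _

lemma unit_mul_inv_iff {g h : G} (p : 𝔾.s h = 𝔾.r (𝔾.inv g)) :
    𝔾.unit (𝔾.mul h (𝔾.inv g) p) ↔ h = g := by
  constructor
  · intro hu
    set m := 𝔾.mul h (𝔾.inv g) p with hmdef
    have hm : m = 𝔾.r h := hu.symm.trans (𝔾.r_mul h (𝔾.inv g) p)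
    have hsm : 𝔾.s m = 𝔾.r g := by rw [hmdef, 𝔾.s_mul, 𝔾.s_inv]
    have hrh : 𝔾.r h = 𝔾.r g := by rw [← hsm, hm, 𝔾.s_of_r]
    have p2 : 𝔾.s (𝔾.inv g) = 𝔾.r g := 𝔾.s_inv g
    have hsh : 𝔾.s h = 𝔾.s g := by rw [p, 𝔾.r_inv]
    have q : 𝔾.s m = 𝔾.r g := hsm
    have pq : 𝔾.s (𝔾.mul h (𝔾.inv g) p) = 𝔾.r g := hsm
    have qp : 𝔾.s h = 𝔾.r (𝔾.mul (𝔾.inv g) g p2) := by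
      rw [𝔾.r_mul, 𝔾.r_inv, hsh]
    have hassoc := 𝔾.assoc h (𝔾.inv g) g p p2 pq qp
    have h1 : 𝔾.mul (𝔾.mul h (𝔾.inv g) p) g pq = g := by
      have := 𝔾.mul_congr (hm.trans hrh) rfl pq (by rw [𝔾.s_of_r] :
        𝔾.s (𝔾.r g) = 𝔾.r g)
      rw [this]; exact 𝔾.id_mul g _
    have h2 : 𝔾.mul h (𝔾.mul (𝔾.inv g) g p2) qp = h := by
      have him : 𝔾.mul (𝔾.inv g) g p2 = 𝔾.s g := 𝔾.inv_mul g p2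
      have qp2 : 𝔾.s h = 𝔾.r (𝔾.s h) := by rw [𝔾.r_of_s]
      calc 𝔾.mul h (𝔾.mul (𝔾.inv g) g p2) qp
          = 𝔾.mul h (𝔾.s h) qp2 := 𝔾.mul_congr rfl (him.trans hsh.symm) qp qp2
        _ = h := 𝔾.mul_id h qp2
    rw [← h1, hassoc, h2]
  · rintro rfl
    rw [𝔾.mul_inv h p]
    exact unit_r 𝔾 h

end DGroupoid
namespace PartialAction

variable {G : Type*} {R : Type*} [NonUnitalRing R] {𝔾 : DGroupoid G} (P : PartialAction 𝔾 R)

lemma act_zero (g : G) : P.act g 0 = 0 := by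
  have := P.act_add g 0 (P.zero_mem _) 0 (P.zero_mem _)
  rw [add_zero] at this
  exact (add_eq_left.mp this.symm)

lemma mem_inv {g : G} {a : R} (ha : a ∈ P.D g) : P.act (𝔾.inv g) a ∈ P.D (𝔾.inv g) :=
  P.act_mem (𝔾.inv g) a (by rw [𝔾.inv_inv]; exact ha)

lemma act_inv' {g : G} {a : R} (ha : a ∈ P.D g) : P.act g (P.act (𝔾.inv g) a) = a := by
  have := P.act_inv (𝔾.inv g) a (by rw [𝔾.inv_inv]; exact ha)
  rwa [𝔾.inv_inv] at this

lemma act_mul' {g : G} {a b : R} (ha : a ∈ P.D g) (hb : b ∈ P.D g) :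
    P.act (𝔾.inv g) (a * b) = P.act (𝔾.inv g) a * P.act (𝔾.inv g) b :=
  P.act_mul (𝔾.inv g) a (by rw [𝔾.inv_inv]; exact ha) b (by rw [𝔾.inv_inv]; exact hb)

lemma act_add' {g : G} {a b : R} (ha : a ∈ P.D g) (hb : b ∈ P.D g) :
    P.act (𝔾.inv g) (a + b) = P.act (𝔾.inv g) a + P.act (𝔾.inv g) b :=
  P.act_add (𝔾.inv g) a (by rw [𝔾.inv_inv]; exact ha) b (by rw [𝔾.inv_inv]; exact hb)

lemma sub_mem' (g : G) {a b : R} (ha : a ∈ P.D g) (hb : b ∈ P.D g) : a - b ∈ P.D g := by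
  rw [sub_eq_add_neg]; exact P.add_mem g a ha _ (P.neg_mem g b hb)

/-- The auxiliary product `α_{g⁻¹}(a) b` lies in `D_{g⁻¹} ∩ D_h`. -/
lemma aux_mem {g h : G} (p : 𝔾.s g = 𝔾.r h) {a b : R} (ha : a ∈ P.D g) (hb : b ∈ P.D h) :
    P.act (𝔾.inv g) a * b ∈ P.D (𝔾.inv g) ∩ P.D h := by
  have hX : P.act (𝔾.inv g) a ∈ P.D (𝔾.inv g) := P.mem_inv ha
  have hbr : b ∈ P.D (𝔾.r (𝔾.inv g)) := by rw [𝔾.r_inv, p]; exact P.subset_r h hb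
  have hXr : P.act (𝔾.inv g) a ∈ P.D (𝔾.r h) := by
    rw [← p, ← 𝔾.r_inv g]; exact P.subset_r _ hX
  exact ⟨(P.idealInR (𝔾.inv g) _ hX b hbr).1, (P.idealInR h b hb _ hXr).2⟩

/-- The product value `α_g(α_{g⁻¹}(a) b)` lies in `D_g ∩ D_{gh}`. -/
lemma val_mem {g h : G} (p : 𝔾.s g = 𝔾.r h) {a b : R} (ha : a ∈ P.D g) (hb : b ∈ P.D h) :
    P.act g (P.act (𝔾.inv g) a * b) ∈ P.D g ∩ P.D (𝔾.mul g h p) := by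
  obtain ⟨h1, h2⟩ := P.aux_mem p ha hb
  refine ⟨P.act_mem g _ h1, ?_⟩
  set x := P.act (𝔾.inv g) a * b with hx
  have hy : P.act (𝔾.inv h) x ∈ P.D (𝔾.inv (𝔾.mul g h p)) := P.act_comp_mem g h p x h1 h2
  have hkey : P.act g (P.act h (P.act (𝔾.inv h) x)) = P.act (𝔾.mul g h p) (P.act (𝔾.inv h) x) := by
    refine P.act_comp g h p _ (P.mem_inv h2) ?_
    rw [P.act_inv' h2]; exact h1
  rw [P.act_inv' h2] at hkey
  rw [hkey]
  exact P.act_mem _ _ hy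

end PartialAction
namespace PartialAction

variable {G : Type*} {R : Type*} [NonUnitalRing R] {𝔾 : DGroupoid G} (P : PartialAction 𝔾 R)

lemma skewMul_eq (a b : G →₀ R) {A B : Finset G} (hA : a.support ⊆ A) (hB : b.support ⊆ B) :
    P.skewMul a b = A.sum fun g => B.sum fun h =>
      if p : 𝔾.s g = 𝔾.r h then
        Finsupp.single (𝔾.mul g h p) (P.act g (P.act (𝔾.inv g) (a g) * b h))
      else 0 := by
  unfold skewMul
  rw [Finset.sum_subset hA]
  · refine Finset.sum_congr rfl fun g _ => ?_
    refine Finset.sum_subset hB fun h _ hh => ?_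
    rw [Finsupp.notMem_support_iff.mp hh]
    split <;> simp [P.act_zero]
  · intro g _ hg
    rw [Finsupp.notMem_support_iff.mp hg]
    refine Finset.sum_eq_zero fun h _ => ?_
    split <;> simp [P.act_zero]

lemma skewMul_single_single (g h : G) (a b : R) :
    P.skewMul (Finsupp.single g a) (Finsupp.single h b) =
      if p : 𝔾.s g = 𝔾.r h then
        Finsupp.single (𝔾.mul g h p) (P.act g (P.act (𝔾.inv g) a * b))
      else 0 := by
  rw [P.skewMul_eq _ _ (Finsupp.support_single_subset (a := g))
    (Finsupp.support_single_subset (a := h))]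
  simp

lemma skewMul_zero_left (b : G →₀ R) : P.skewMul 0 b = 0 := by
  simp [skewMul]

lemma skewMul_zero_right (a : G →₀ R) : P.skewMul a 0 = 0 := by
  simp [skewMul]

lemma single_mem_carrier {g : G} {a : R} (ha : a ∈ P.D g) (k : G) :
    (Finsupp.single g a) k ∈ P.D k := by
  rw [Finsupp.single_apply]
  split
  · next h => exact h ▸ ha
  · exact P.zero_mem k

lemma sum_mem_D {ι : Type*} (s : Finset ι) (f : ι → R) (k : G)
    (hf : ∀ i ∈ s, f i ∈ P.D k) : (∑ i ∈ s, f i) ∈ P.D k := by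
  classical
  induction s using Finset.induction_on with
  | empty => simpa using P.zero_mem k
  | insert _ _ hni ih =>
    rw [Finset.sum_insert hni]
    exact P.add_mem k _ (hf _ (Finset.mem_insert_self _ _)) _
      (ih fun i hi => hf i (Finset.mem_insert_of_mem hi))

lemma skewMul_carrier {a b : G →₀ R} (ha : ∀ g, a g ∈ P.D g) (hb : ∀ g, b g ∈ P.D g) :
    ∀ k, (P.skewMul a b) k ∈ P.D k := by
  intro k
  unfold skewMul
  rw [Finset.sum_apply']
  refine P.sum_mem_D _ _ _ fun g _ => ?_
  rw [Finset.sum_apply']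
  refine P.sum_mem_D _ _ _ fun h _ => ?_
  split
  · next p => exact P.single_mem_carrier (P.val_mem p (ha g) (hb h)).2 k
  · exact P.zero_mem k

end PartialAction
namespace PartialAction

variable {G : Type*} {R : Type*} [NonUnitalRing R] {𝔾 : DGroupoid G} (P : PartialAction 𝔾 R)

lemma skewMul_add_right {a b c : G →₀ R} (ha : ∀ g, a g ∈ P.D g)
    (hb : ∀ g, b g ∈ P.D g) (hc : ∀ g, c g ∈ P.D g) :
    P.skewMul a (b + c) = P.skewMul a b + P.skewMul a c := by
  rw [P.skewMul_eq a (b + c) (subset_refl _)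
      ((Finsupp.support_add).trans (subset_refl (b.support ∪ c.support))),
    P.skewMul_eq a b (subset_refl _) (Finset.subset_union_left),
    P.skewMul_eq a c (subset_refl _) (Finset.subset_union_right),
    ← Finset.sum_add_distrib]
  refine Finset.sum_congr rfl fun g _ => ?_
  rw [← Finset.sum_add_distrib]
  refine Finset.sum_congr rfl fun h _ => ?_
  split
  · next p =>
    rw [← Finsupp.single_add]
    congr 1
    have hX : P.act (𝔾.inv g) (a g) ∈ P.D (𝔾.inv g) := P.mem_inv (ha g)
    have h1 : P.act (𝔾.inv g) (a g) * b h ∈ P.D (𝔾.inv g) := (P.aux_mem p (ha g) (hb h)).1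
    have h2 : P.act (𝔾.inv g) (a g) * c h ∈ P.D (𝔾.inv g) := (P.aux_mem p (ha g) (hc h)).1
    rw [Finsupp.add_apply, mul_add]
    exact P.act_add g _ h1 _ h2
  · simp

lemma skewMul_add_left {a b c : G →₀ R} (ha : ∀ g, a g ∈ P.D g)
    (hb : ∀ g, b g ∈ P.D g) (hc : ∀ g, c g ∈ P.D g) :
    P.skewMul (a + b) c = P.skewMul a c + P.skewMul b c := by
  rw [P.skewMul_eq (a + b) c
      ((Finsupp.support_add).trans (subset_refl (a.support ∪ b.support))) (subset_refl _),
    P.skewMul_eq a c (Finset.subset_union_left) (subset_refl _),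
    P.skewMul_eq b c (Finset.subset_union_right) (subset_refl _),
    ← Finset.sum_add_distrib]
  refine Finset.sum_congr rfl fun g _ => ?_
  rw [← Finset.sum_add_distrib]
  refine Finset.sum_congr rfl fun h _ => ?_
  split
  · next p =>
    rw [← Finsupp.single_add]
    congr 1
    rw [Finsupp.add_apply, P.act_add' (ha g) (hb g), add_mul]
    exact P.act_add g _ (P.aux_mem p (ha g) (hc h)).1 _ (P.aux_mem p (hb g) (hc h)).1
  · simp

lemma sum_mem_carrier {ι : Type*} (s : Finset ι) (f : ι → (G →₀ R))
    (hf : ∀ i ∈ s, ∀ k, (f i) k ∈ P.D k) : ∀ k, (∑ i ∈ s, f i) k ∈ P.D k := by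
  intro k
  rw [Finset.sum_apply']
  exact P.sum_mem_D _ _ _ fun i hi => hf i hi k

lemma skewMul_sum_left {ι : Type*} (s : Finset ι) (f : ι → (G →₀ R)) {c : G →₀ R}
    (hf : ∀ i ∈ s, ∀ k, (f i) k ∈ P.D k) (hc : ∀ g, c g ∈ P.D g) :
    P.skewMul (∑ i ∈ s, f i) c = ∑ i ∈ s, P.skewMul (f i) c := by
  classical
  induction s using Finset.induction_on with
  | empty => simpa using P.skewMul_zero_left c
  | insert _ _ hni ih =>
    rename_i a s
    rw [Finset.sum_insert hni, Finset.sum_insert hni,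
      P.skewMul_add_left (hf a (Finset.mem_insert_self _ _))
        (P.sum_mem_carrier s f fun i hi => hf i (Finset.mem_insert_of_mem hi)) hc,
      ih fun i hi => hf i (Finset.mem_insert_of_mem hi)]

lemma skewMul_sum_right {ι : Type*} (s : Finset ι) (f : ι → (G →₀ R)) {a : G →₀ R}
    (hf : ∀ i ∈ s, ∀ k, (f i) k ∈ P.D k) (ha : ∀ g, a g ∈ P.D g) :
    P.skewMul a (∑ i ∈ s, f i) = ∑ i ∈ s, P.skewMul a (f i) := by
  classical
  induction s using Finset.induction_on with
  | empty => simpa using P.skewMul_zero_right a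
  | insert _ _ hni ih =>
    rename_i b s
    rw [Finset.sum_insert hni, Finset.sum_insert hni,
      P.skewMul_add_right ha (hf b (Finset.mem_insert_self _ _))
        (P.sum_mem_carrier s f fun i hi => hf i (Finset.mem_insert_of_mem hi)),
      ih fun i hi => hf i (Finset.mem_insert_of_mem hi)]

lemma P0_zero : P.P0 0 = 0 := by simp [P0]

lemma P0_single (g : G) (v : R) : P.P0 (Finsupp.single g v) = if 𝔾.unit g then v else 0 := by
  unfold P0
  exact Finsupp.sum_single_index (by simp)

lemma P0_add (a b : G →₀ R) : P.P0 (a + b) = P.P0 a + P.P0 b := by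
  unfold P0
  refine Finsupp.sum_add_index' (fun g => by simp) fun g v w => ?_
  split <;> simp

lemma P0_sum {ι : Type*} (s : Finset ι) (f : ι → (G →₀ R)) :
    P.P0 (∑ i ∈ s, f i) = ∑ i ∈ s, P.P0 (f i) := by
  classical
  induction s using Finset.induction_on with
  | empty => simpa using P.P0_zero
  | insert _ _ hni ih => rw [Finset.sum_insert hni, Finset.sum_insert hni, P.P0_add, ih]

end PartialAction
/-- Let `I` be a two-sided ideal of `S = R ⋊_α G`, `J = P₀(I)`,
`I₀ = I ∩ ⊕_{e ∈ G₀} D_e δ_e` and `J₀ = P₀(I₀)`. Then: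
(i) `I ⊆ J ⋊_{α^J} G`;
(ii) if `b_t δ_t ∈ J₀ ⋊_{α^{J₀}} G` with `b_t ∈ D_t ∩ J₀`, then `b_t δ_{r t} ∈ I₀`;
(iii) `J₀ ⋊_{α^{J₀}} G ⊆ I`;
(iv) `J₀ ⋊_{α^{J₀}} G = S I₀ S` (the set of finite sums of products `u x v` with
`u, v ∈ S`, `x ∈ I₀`). -/
theorem skew_ideal_structure {G R : Type*} [NonUnitalRing R]
    (𝔾 : DGroupoid G) (P : PartialAction 𝔾 R)
    (hsu : ∀ g, IsSUnitalSet (P.D g)) (hds : P.directSum)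
    (I : Set (G →₀ R)) (hI : P.IsSkewIdeal I) :
    I ⊆ P.skewOf (P.P0 '' I) ∧
    (∀ t : G, ∀ b : R, b ∈ P.D t → b ∈ P.P0 '' (I ∩ P.diag) →
      Finsupp.single (𝔾.r t) b ∈ I ∩ P.diag) ∧
    P.skewOf (P.P0 '' (I ∩ P.diag)) ⊆ I ∧
    P.skewOf (P.P0 '' (I ∩ P.diag)) =
      (AddSubmonoid.closure {w : G →₀ R | ∃ u ∈ P.carrier, ∃ x ∈ I ∩ P.diag,
        ∃ v ∈ P.carrier, w = P.skewMul (P.skewMul u x) v} : AddSubmonoid (G →₀ R)) := by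
  classical
  obtain ⟨hIc, hI0, hIadd, hIneg, hImul⟩ := hI
  set J₀ := P.P0 '' (I ∩ P.diag) with hJ₀def
  -- basic facts about diag and J₀
  have hdiag0 : (0 : G →₀ R) ∈ P.diag := ⟨fun g => by simpa using P.zero_mem g, by simp⟩
  have hdiagadd : ∀ a ∈ P.diag, ∀ b ∈ P.diag, a + b ∈ P.diag := by
    rintro a ⟨ha1, ha2⟩ b ⟨hb1, hb2⟩
    refine ⟨fun g => by rw [Finsupp.add_apply]; exact P.add_mem g _ (ha1 g) _ (hb1 g),
      fun g hg => ?_⟩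
    rcases Finset.mem_union.mp (Finsupp.support_add hg) with h | h
    exacts [ha2 g h, hb2 g h]
  have hJ0zero : (0 : R) ∈ J₀ := ⟨0, ⟨hI0, hdiag0⟩, P.P0_zero⟩
  have hJ0add : ∀ x ∈ J₀, ∀ y ∈ J₀, x + y ∈ J₀ := by
    rintro x ⟨c, ⟨hcI, hcd⟩, rfl⟩ y ⟨c', ⟨hcI', hcd'⟩, rfl⟩
    exact ⟨c + c', ⟨hIadd _ hcI _ hcI', hdiagadd _ hcd _ hcd'⟩, P.P0_add c c'⟩
  have hP0diag : ∀ c ∈ P.diag, P.P0 c = c.sum fun _ v => v := by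
    rintro c ⟨-, hcu⟩
    exact Finsupp.sum_congr fun g hg => if_pos (hcu g hg)
  -- L9 : from a single in I one gets a diagonal single in I₀
  have hL9 : ∀ m : G, ∀ d ∈ P.D m, Finsupp.single m d ∈ I →
      Finsupp.single (𝔾.r m) d ∈ I ∩ P.diag := by
    intro m d hd hin
    obtain ⟨u', hu'D, hdu⟩ := (hsu m d hd).1
    have hc : P.act (𝔾.inv m) u' ∈ P.D (𝔾.inv m) := P.mem_inv hu'D
    have hy : Finsupp.single (𝔾.inv m) (P.act (𝔾.inv m) u') ∈ P.carrier :=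
      fun k => P.single_mem_carrier hc k
    have hcomp : P.skewMul (Finsupp.single m d)
        (Finsupp.single (𝔾.inv m) (P.act (𝔾.inv m) u')) = Finsupp.single (𝔾.r m) d := by
      rw [P.skewMul_single_single]
      have p : 𝔾.s m = 𝔾.r (𝔾.inv m) := (𝔾.r_inv m).symm
      rw [dif_pos p, ← P.act_mul' hd hu'D, hdu, P.act_inv' hd, 𝔾.mul_inv m p]
    refine ⟨?_, fun k => P.single_mem_carrier (P.subset_r m hd) k, fun k hk => ?_⟩
    · rw [← hcomp]; exact (hImul _ hin _ hy).1
    · have := Finsupp.support_single_subset hk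
      rw [Finset.mem_singleton] at this
      rw [this]; exact DGroupoid.unit_r 𝔾 m
  have hL9' : ∀ m : G, ∀ d ∈ P.D m, Finsupp.single m d ∈ I → d ∈ J₀ := by
    intro m d hd hin
    exact ⟨Finsupp.single (𝔾.r m) d, hL9 m d hd hin,
      by rw [P.P0_single, if_pos (DGroupoid.unit_r 𝔾 m)]⟩
  -- part (ii)
  have part2 : ∀ t : G, ∀ b : R, b ∈ P.D t → b ∈ J₀ →
      Finsupp.single (𝔾.r t) b ∈ I ∩ P.diag := by
    intro t b hb hbJ
    obtain ⟨c, hc, hP0c⟩ := hbJ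
    have hsum : c.sum (fun _ v => v) = b := by rw [← hP0diag c hc.2]; exact hP0c
    have hbrt : b ∈ P.D (𝔾.r t) := P.subset_r t hb
    set f := c - Finsupp.single (𝔾.r t) b with hf
    have hfu : ∀ g ∈ f.support, 𝔾.unit g := by
      intro g hg
      rcases Finset.mem_union.mp (Finsupp.support_sub hg) with h | h
      · exact hc.2.2 g h
      · have := Finsupp.support_single_subset h
        rw [Finset.mem_singleton] at this
        rw [this]; exact DGroupoid.unit_r 𝔾 t
    have hfD : ∀ g, f g ∈ P.D g := fun g => by
      rw [hf, Finsupp.sub_apply]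
      exact P.sub_mem' g (hc.2.1 g) (P.single_mem_carrier hbrt g)
    have hfs : f.sum (fun _ v => v) = 0 := by
      rw [hf, Finsupp.sum_sub_index fun a b₁ b₂ => rfl, hsum,
        Finsupp.sum_single_index rfl, sub_self]
    have hf0 : f = 0 := hds.2 f hfu hfD hfs
    have hceq : c = Finsupp.single (𝔾.r t) b := by
      have := sub_eq_zero.mp (hf ▸ hf0)
      exact this
    rw [← hceq]; exact hc
  -- part (i)
  have part1 : I ⊆ P.skewOf (P.P0 '' I) := by
    intro a haI
    refine fun g => ⟨hIc haI g, ?_⟩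
    by_cases h0 : a g = 0
    · rw [h0]; exact ⟨0, hI0, P.P0_zero⟩
    obtain ⟨u, huD, hau⟩ := (hsu g (a g) (hIc haI g)).1
    have hcm : P.act (𝔾.inv g) u ∈ P.D (𝔾.inv g) := P.mem_inv huD
    have hyc : Finsupp.single (𝔾.inv g) (P.act (𝔾.inv g) u) ∈ P.carrier :=
      fun k => P.single_mem_carrier hcm k
    refine ⟨P.skewMul a (Finsupp.single (𝔾.inv g) (P.act (𝔾.inv g) u)),
      (hImul a haI _ hyc).1, ?_⟩
    rw [P.skewMul_eq a _ (subset_refl _) (Finsupp.support_single_subset (a := 𝔾.inv g))]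
    simp only [Finset.sum_singleton, Finsupp.single_eq_same]
    rw [P.P0_sum]
    have hg : g ∈ a.support := Finsupp.mem_support_iff.mpr h0
    refine (Finset.sum_eq_single_of_mem g hg ?_).trans ?_
    · intro h _ hne
      split
      · next p =>
        rw [P.P0_single, if_neg]
        intro hu
        exact hne ((DGroupoid.unit_mul_inv_iff p).mp hu)
      · exact P.P0_zero
    · have p : 𝔾.s g = 𝔾.r (𝔾.inv g) := (𝔾.r_inv g).symm
      rw [dif_pos p, P.P0_single, 𝔾.mul_inv g p, if_pos (DGroupoid.unit_r 𝔾 g),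
        ← P.act_mul' (hIc haI g) huD, hau, P.act_inv' (hIc haI g)]
  -- a frequently used computation: δ_{r g}(b) ⬝ δ_g(u) = δ_g(b u)
  have hdmul : ∀ (g : G) (b u : R), b ∈ P.D (𝔾.r g) → u ∈ P.D g →
      P.skewMul (Finsupp.single (𝔾.r g) b) (Finsupp.single g u) =
        Finsupp.single g (b * u) := by
    intro g b u hb hu
    rw [P.skewMul_single_single]
    have p : 𝔾.s (𝔾.r g) = 𝔾.r g := 𝔾.s_of_r g
    rw [dif_pos p]
    have hidx : 𝔾.mul (𝔾.r g) g p = g := 𝔾.id_mul g p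
    have hval : P.act (𝔾.r g) (P.act (𝔾.inv (𝔾.r g)) b * u) = b * u := by
      rw [DGroupoid.unit_inv (DGroupoid.unit_r 𝔾 g),
        P.act_unit _ (DGroupoid.unit_r 𝔾 g) _ hb]
      have hm : b * u ∈ P.D (𝔾.r g) :=
        ((P.idealR g).2.2.2 b hb u).1
      rw [P.act_unit _ (DGroupoid.unit_r 𝔾 g) _ hm]
    rw [hidx, hval]
  -- part (iii)
  have hsingle_mem : ∀ a ∈ P.skewOf J₀, ∀ g : G, Finsupp.single g (a g) ∈ I := by
    intro a ha g
    obtain ⟨hgD, hgJ⟩ := ha g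
    have h2 := part2 g (a g) hgD hgJ
    obtain ⟨u, huD, hbu⟩ := (hsu g (a g) hgD).1
    have hyc : Finsupp.single g u ∈ P.carrier := fun k => P.single_mem_carrier huD k
    have hcomp := hdmul g (a g) u (P.subset_r g hgD) huD
    rw [hbu] at hcomp
    rw [← hcomp]
    exact (hImul _ h2.1 _ hyc).1
  have part3 : P.skewOf J₀ ⊆ I := by
    intro a ha
    have hrep : a = ∑ g ∈ a.support, Finsupp.single g (a g) := (Finsupp.sum_single a).symm
    rw [hrep]
    exact Finset.sum_induction _ (· ∈ I) (fun x y hx hy => hIadd x hx y hy) hI0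
      fun g _ => hsingle_mem a ha g
  -- L10 : components of elements of I₀ give singles in I
  have hL10 : ∀ x ∈ I ∩ P.diag, ∀ e : G, Finsupp.single e (x e) ∈ I := by
    rintro x ⟨hxI, hxD, hxU⟩ e
    by_cases h0 : x e = 0
    · rw [h0, Finsupp.single_zero]; exact hI0
    have he : e ∈ x.support := Finsupp.mem_support_iff.mpr h0
    have hue : 𝔾.unit e := hxU e he
    obtain ⟨u', hu'D, hux⟩ := (hsu e (x e) (hxD e)).2
    have hzc : Finsupp.single e u' ∈ P.carrier := fun k => P.single_mem_carrier hu'D k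
    have hcomp : P.skewMul (Finsupp.single e u') x = Finsupp.single e (x e) := by
      rw [P.skewMul_eq (Finsupp.single e u') x (Finsupp.support_single_subset (a := e))
        (subset_refl _)]
      rw [Finset.sum_singleton, Finsupp.single_eq_same]
      refine (Finset.sum_eq_single_of_mem e he ?_).trans ?_
      · intro h hh hne
        rw [dif_neg]
        intro p
        exact hne (((hxU h hh).symm.trans p.symm).trans (DGroupoid.unit_s hue))
      · have p : 𝔾.s e = 𝔾.r e := by rw [DGroupoid.unit_s hue, hue]
        rw [dif_pos p]
        have hidx := DGroupoid.unit_mul_self hue p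
        have hval : P.act e (P.act (𝔾.inv e) u' * x e) = x e := by
          rw [DGroupoid.unit_inv hue, P.act_unit e hue u' hu'D]
          have hxe' : x e ∈ P.D (𝔾.r e) := by rw [hue]; exact hxD e
          have hmem : u' * x e ∈ P.D e := (P.idealInR e u' hu'D (x e) hxe').1
          rw [P.act_unit e hue _ hmem, hux]
        rw [hidx, hval]
    rw [← hcomp]
    exact (hImul x hxI _ hzc).2
  -- the target additive submonoid for part (iv)
  let T : AddSubmonoid (G →₀ R) :=
    { carrier := P.skewOf J₀
      zero_mem' := fun g => by simpa using ⟨P.zero_mem g, hJ0zero⟩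
      add_mem' := by
        intro a b ha hb g
        rw [Finsupp.add_apply]
        exact ⟨P.add_mem g _ (ha g).1 _ (hb g).1, hJ0add _ (ha g).2 _ (hb g).2⟩ }
  refine ⟨part1, part2, part3, ?_⟩
  apply Set.Subset.antisymm
  · -- skewOf J₀ ⊆ closure of generators
    intro w hw
    have hrep : w = ∑ g ∈ w.support, Finsupp.single g (w g) := (Finsupp.sum_single w).symm
    rw [hrep]
    refine AddSubmonoid.sum_mem _ fun g _ => AddSubmonoid.subset_closure ?_
    obtain ⟨hgD, hgJ⟩ := hw g
    obtain ⟨v₀, hv₀D, hbv⟩ := (hsu g (w g) hgD).1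
    obtain ⟨u₀, hu₀D, hub⟩ := (hsu g (w g) hgD).2
    refine ⟨Finsupp.single (𝔾.r g) u₀,
      fun k => P.single_mem_carrier (P.subset_r g hu₀D) k,
      Finsupp.single (𝔾.r g) (w g), part2 g (w g) hgD hgJ,
      Finsupp.single g v₀, fun k => P.single_mem_carrier hv₀D k, ?_⟩
    have h1 : P.skewMul (Finsupp.single (𝔾.r g) u₀) (Finsupp.single (𝔾.r g) (w g)) =
        Finsupp.single (𝔾.r g) (w g) := by
      have := hdmul (𝔾.r g) u₀ (w g) (by rw [𝔾.r_idem]; exact P.subset_r g hu₀D)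
        (P.subset_r g hgD)
      rw [𝔾.r_idem] at this
      rw [this, hub]
    have h2 : P.skewMul (Finsupp.single (𝔾.r g) (w g)) (Finsupp.single g v₀) =
        Finsupp.single g (w g) := by
      have := hdmul g (w g) v₀ (P.subset_r g hgD) hv₀D
      rw [hbv] at this
      exact this
    rw [h1, h2]
  · -- closure of generators ⊆ skewOf J₀
    have hgen : {w : G →₀ R | ∃ u ∈ P.carrier, ∃ x ∈ I ∩ P.diag,
        ∃ v ∈ P.carrier, w = P.skewMul (P.skewMul u x) v} ⊆ (T : Set (G →₀ R)) := by
      rintro w ⟨u, hu, x, hx, v, hv, rfl⟩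
      have hxc : ∀ g, x g ∈ P.D g := hx.2.1
      have huc : ∀ g, u g ∈ P.D g := hu
      have hvc : ∀ g, v g ∈ P.D g := hv
      have hurep : ∑ g ∈ u.support, Finsupp.single g (u g) = u := Finsupp.sum_single u
      have hxrep : ∑ e ∈ x.support, Finsupp.single e (x e) = x := Finsupp.sum_single x
      have hvrep : ∑ h ∈ v.support, Finsupp.single h (v h) = v := Finsupp.sum_single v
      have exp1 : P.skewMul (P.skewMul u x) v =
          ∑ g ∈ u.support, ∑ e ∈ x.support, ∑ h ∈ v.support,
            P.skewMul (P.skewMul (Finsupp.single g (u g)) (Finsupp.single e (x e)))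
              (Finsupp.single h (v h)) := by
        calc P.skewMul (P.skewMul u x) v
            = P.skewMul (P.skewMul (∑ g ∈ u.support, Finsupp.single g (u g)) x) v := by
              rw [hurep]
          _ = P.skewMul (∑ g ∈ u.support, P.skewMul (Finsupp.single g (u g)) x) v := by
              rw [P.skewMul_sum_left _ _ (fun g _ k => P.single_mem_carrier (huc g) k) hxc]
          _ = ∑ g ∈ u.support, P.skewMul (P.skewMul (Finsupp.single g (u g)) x) v := by
              rw [P.skewMul_sum_left _ _
                (fun g _ => P.skewMul_carrier (fun k => P.single_mem_carrier (huc g) k) hxc)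
                hvc]
          _ = ∑ g ∈ u.support, ∑ e ∈ x.support, ∑ h ∈ v.support,
                P.skewMul (P.skewMul (Finsupp.single g (u g)) (Finsupp.single e (x e)))
                  (Finsupp.single h (v h)) := by
              refine Finset.sum_congr rfl fun g _ => ?_
              calc P.skewMul (P.skewMul (Finsupp.single g (u g)) x) v
                  = P.skewMul (P.skewMul (Finsupp.single g (u g))
                      (∑ e ∈ x.support, Finsupp.single e (x e))) v := by rw [hxrep]
                _ = P.skewMul (∑ e ∈ x.support,
                      P.skewMul (Finsupp.single g (u g)) (Finsupp.single e (x e))) v := by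
                    rw [P.skewMul_sum_right _ _
                      (fun e _ k => P.single_mem_carrier (hxc e) k)
                      (fun k => P.single_mem_carrier (huc g) k)]
                _ = ∑ e ∈ x.support, P.skewMul
                      (P.skewMul (Finsupp.single g (u g)) (Finsupp.single e (x e))) v := by
                    rw [P.skewMul_sum_left _ _
                      (fun e _ => P.skewMul_carrier
                        (fun k => P.single_mem_carrier (huc g) k)
                        (fun k => P.single_mem_carrier (hxc e) k))
                      hvc]
                _ = ∑ e ∈ x.support, ∑ h ∈ v.support, P.skewMul
                      (P.skewMul (Finsupp.single g (u g)) (Finsupp.single e (x e)))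
                      (Finsupp.single h (v h)) := by
                    refine Finset.sum_congr rfl fun e _ => ?_
                    rw [← hvrep, P.skewMul_sum_right _ _
                      (fun h _ k => P.single_mem_carrier (hvc h) k)
                      (P.skewMul_carrier
                        (fun k => P.single_mem_carrier (huc g) k)
                        (fun k => P.single_mem_carrier (hxc e) k)), hvrep]
      rw [exp1]
      refine AddSubmonoid.sum_mem T fun g _ => AddSubmonoid.sum_mem T fun e _ =>
        AddSubmonoid.sum_mem T fun h _ => ?_
      -- the triple product of singles lies in T
      have hWc : ∀ k, (P.skewMul (P.skewMul (Finsupp.single g (u g)) (Finsupp.single e (x e)))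
          (Finsupp.single h (v h))) k ∈ P.D k :=
        P.skewMul_carrier
          (P.skewMul_carrier (fun k => P.single_mem_carrier (huc g) k)
            (fun k => P.single_mem_carrier (hxc e) k))
          (fun k => P.single_mem_carrier (hvc h) k)
      have hsx : Finsupp.single e (x e) ∈ I := hL10 x hx e
      have hWI : P.skewMul (P.skewMul (Finsupp.single g (u g)) (Finsupp.single e (x e)))
          (Finsupp.single h (v h)) ∈ I :=
        (hImul _ ((hImul _ hsx _ (fun k => P.single_mem_carrier (huc g) k)).2) _
          (fun k => P.single_mem_carrier (hvc h) k)).1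
      by_cases p : 𝔾.s g = 𝔾.r e
      · have hfirst : P.skewMul (Finsupp.single g (u g)) (Finsupp.single e (x e)) =
            Finsupp.single (𝔾.mul g e p) (P.act g (P.act (𝔾.inv g) (u g) * x e)) := by
          rw [P.skewMul_single_single, dif_pos p]
        have hd₁ : P.act g (P.act (𝔾.inv g) (u g) * x e) ∈ P.D (𝔾.mul g e p) :=
          (P.val_mem p (huc g) (hxc e)).2
        by_cases q : 𝔾.s (𝔾.mul g e p) = 𝔾.r h
        · have hW : P.skewMul (P.skewMul (Finsupp.single g (u g)) (Finsupp.single e (x e)))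
              (Finsupp.single h (v h)) =
              Finsupp.single (𝔾.mul (𝔾.mul g e p) h q)
                (P.act (𝔾.mul g e p) (P.act (𝔾.inv (𝔾.mul g e p))
                  (P.act g (P.act (𝔾.inv g) (u g) * x e)) * v h)) := by
            rw [hfirst, P.skewMul_single_single, dif_pos q]
          have hd₂ : P.act (𝔾.mul g e p) (P.act (𝔾.inv (𝔾.mul g e p))
              (P.act g (P.act (𝔾.inv g) (u g) * x e)) * v h) ∈
              P.D (𝔾.mul (𝔾.mul g e p) h q) := (P.val_mem q hd₁ (hvc h)).2
          have hJd : P.act (𝔾.mul g e p) (P.act (𝔾.inv (𝔾.mul g e p))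
              (P.act g (P.act (𝔾.inv g) (u g) * x e)) * v h) ∈ J₀ :=
            hL9' _ _ hd₂ (hW ▸ hWI)
          intro k
          refine ⟨hWc k, ?_⟩
          rw [hW, Finsupp.single_apply]
          split
          · exact hJd
          · exact hJ0zero
        · have hW : P.skewMul (P.skewMul (Finsupp.single g (u g)) (Finsupp.single e (x e)))
              (Finsupp.single h (v h)) = 0 := by
            rw [hfirst, P.skewMul_single_single, dif_neg q]
          intro k
          rw [hW]
          exact ⟨by simpa using P.zero_mem k, by simpa using hJ0zero⟩
      · have hW : P.skewMul (P.skewMul (Finsupp.single g (u g)) (Finsupp.single e (x e)))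
            (Finsupp.single h (v h)) = 0 := by
          rw [P.skewMul_single_single, dif_neg p, P.skewMul_zero_left]
        intro k
        rw [hW]
        exact ⟨by simpa using P.zero_mem k, by simpa using hJ0zero⟩
    intro w hw
    exact AddSubmonoid.closure_le.mpr hgen hw
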